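/- Let g11, g22 : ℝ² → ℝ be twice continuously differentiable on an open rectangle D, and let G(u,v) = diag(g11(u,v), g22(u,v)). Assume that for every center M = (u0, v0) ∈ D and every offset δ = (α, β) with αβ ≠ 0 such that the corresponding closed rectangle lies in D, the energies of the two diagonals are equal: ∫_{-1}^{1} ḋ1(t)ᵀ G(d1(t)) ḋ1(t) dt = ∫_{-1}^{1} ḋ2(t)ᵀ G(d2(t)) ḋ2(t) dt, where d1(t) = M + t(α,β) and d2(t) = M + t(−α,β). Then ∂²g11/∂u∂v = 0 and ∂²g22/∂u∂v = 0 identically on D. -/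

import Mathlib

open intervalIntegral MeasureTheory Filter Set

lemma key1d {ψ : ℝ → ℝ} (hψ : ContDiffAt ℝ 2 ψ 0) :
    Tendsto (fun ε : ℝ => ((∫ t in (-1:ℝ)..1, ψ (t * ε)) - 2 * ψ 0) / ε ^ 2)
      (nhdsWithin 0 (Set.Ioi 0)) (nhds (deriv (deriv ψ) 0 / 3)) := by
  obtain ⟨u, hu, hcd⟩ := hψ.contDiffOn le_rfl (by norm_num)
  obtain ⟨r, hr, hball⟩ := Metric.mem_nhds_iff.1 hu
  have hcdb : ContDiffOn ℝ 2 ψ (Metric.ball 0 r) := hcd.mono hball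
  rw [show (2:WithTop ℕ∞) = 1 + 1 by norm_num,
    contDiffOn_succ_iff_deriv_of_isOpen Metric.isOpen_ball] at hcdb
  obtain ⟨hdiff, -, hcd1⟩ := hcdb
  have hd1 : DifferentiableOn ℝ (deriv ψ) (Metric.ball 0 r) :=
    hcd1.differentiableOn one_ne_zero
  have hcont1 : ContinuousOn (deriv ψ) (Metric.ball 0 r) := hcd1.continuousOn
  have hψcont : ContinuousOn ψ (Metric.ball 0 r) := hdiff.continuousOn
  set c := deriv (deriv ψ) 0 with hc_def
  set d0 := deriv ψ 0 with hd0_def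
  have hb0 : (0:ℝ) ∈ Metric.ball (0:ℝ) r := by simpa using hr
  have hc : HasDerivAt (deriv ψ) c 0 :=
    (hd1.differentiableAt (Metric.isOpen_ball.mem_nhds hb0)).hasDerivAt
  rw [Metric.tendsto_nhdsWithin_nhds]
  intro η hη
  set η' := η / 10 with hη'_def
  have hη' : 0 < η' := by positivity
  have hlo := (hasDerivAt_iff_isLittleO.1 hc).def hη'
  rw [Metric.eventually_nhds_iff] at hlo
  obtain ⟨δ1, hδ1, hlo⟩ := hlo
  refine ⟨min (r/2) (δ1/2), by positivity, ?_⟩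
  intro ε hεpos hεd
  have hε : 0 < ε := hεpos
  rw [Real.dist_eq] at hεd
  have hεr : ε < r := by
    have := abs_of_pos hε
    have h1 : ε < min (r/2) (δ1/2) := by rwa [sub_zero, this] at hεd
    have := min_le_left (r/2) (δ1/2)
    linarith
  have hεδ1 : ε < δ1 := by
    have h1 : ε < min (r/2) (δ1/2) := by rwa [sub_zero, abs_of_pos hε] at hεd
    have := min_le_right (r/2) (δ1/2)
    linarith
  -- the pointwise quadratic Taylor bound
  have hB : ∀ x : ℝ, |x| ≤ ε → |ψ x - ψ 0 - x * d0 - x ^ 2 * (c/2)| ≤ η' * ε * ε := by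
    intro x hx
    have hsub : Set.uIcc 0 x ⊆ Metric.ball (0:ℝ) r := by
      intro y hy
      rw [Set.mem_uIcc] at hy
      rw [Metric.mem_ball, Real.dist_eq, sub_zero]
      have : |y| ≤ |x| := by
        rcases hy with ⟨h1, h2⟩ | ⟨h1, h2⟩
        · rw [abs_of_nonneg h1]; exact le_trans h2 (le_abs_self x)
        · rw [abs_of_nonpos h2]; exact le_trans (neg_le_neg h1) (neg_le_abs x)
      linarith [le_trans this hx]
    have hFTC : ∫ u in (0:ℝ)..x, (deriv ψ u - d0 - u * c) =
        (ψ x - x * d0 - x ^ 2 * (c/2)) - (ψ 0 - 0 * d0 - 0 ^ 2 * (c/2)) := by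
      apply intervalIntegral.integral_eq_sub_of_hasDerivAt
      · intro y hy
        have hyb : y ∈ Metric.ball (0:ℝ) r := hsub hy
        have h1 : HasDerivAt ψ (deriv ψ y) y :=
          (hdiff.differentiableAt (Metric.isOpen_ball.mem_nhds hyb)).hasDerivAt
        have h2 : HasDerivAt (fun u : ℝ => u * d0) d0 y := hasDerivAt_mul_const d0
        have h3 : HasDerivAt (fun u : ℝ => u ^ 2 * (c/2)) ((2 * y ^ 1) * (c/2)) y :=
          (hasDerivAt_pow 2 y).mul_const (c/2)
        have := (h1.fun_sub h2).fun_sub h3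
        convert this using 1
        push_cast; ring
      · apply ContinuousOn.intervalIntegrable
        exact ((hcont1.mono hsub).sub continuousOn_const).sub
          ((continuous_id.mul continuous_const).continuousOn)
    have hbound : ‖∫ u in (0:ℝ)..x, (deriv ψ u - d0 - u * c)‖ ≤ (η' * ε) * |x - 0| := by
      apply intervalIntegral.norm_integral_le_of_norm_le_const
      intro y hy
      have hy' : y ∈ Set.uIcc 0 x := Set.uIoc_subset_uIcc hy
      have hyabs : |y| ≤ |x| := by
        rw [Set.mem_uIcc] at hy'
        rcases hy' with ⟨h1, h2⟩ | ⟨h1, h2⟩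
        · rw [abs_of_nonneg h1]; exact le_trans h2 (le_abs_self x)
        · rw [abs_of_nonpos h2]; exact le_trans (neg_le_neg h1) (neg_le_abs x)
      have hyε : |y| ≤ ε := le_trans hyabs hx
      have := hlo (show dist y 0 < δ1 by rw [Real.dist_eq, sub_zero]; exact lt_of_le_of_lt hyε hεδ1)
      simp only [sub_zero, smul_eq_mul] at this
      calc ‖deriv ψ y - d0 - y * c‖ ≤ η' * ‖y‖ := this
        _ ≤ η' * ε := by rw [Real.norm_eq_abs]; exact mul_le_mul_of_nonneg_left hyε hη'.le
    rw [hFTC] at hbound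
    rw [Real.norm_eq_abs] at hbound
    have h1 : |x - 0| ≤ ε := by rwa [sub_zero]
    calc |ψ x - ψ 0 - x * d0 - x ^ 2 * (c/2)|
        = |(ψ x - x * d0 - x ^ 2 * (c/2)) - (ψ 0 - 0 * d0 - 0 ^ 2 * (c/2))| := by ring_nf
      _ ≤ (η' * ε) * |x - 0| := hbound
      _ ≤ η' * ε * ε := by
          apply mul_le_mul_of_nonneg_left h1; positivity
  -- change of variables
  have hcomp : (∫ t in (-1:ℝ)..1, ψ (t * ε)) = ε⁻¹ * ∫ x in (-ε)..ε, ψ x := by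
    rw [intervalIntegral.integral_comp_mul_right ψ (ne_of_gt hε)]
    norm_num [smul_eq_mul]
  -- integrability on [-ε, ε]
  have hsubε : Set.uIcc (-ε) ε ⊆ Metric.ball (0:ℝ) r := by
    intro y hy
    rw [Set.uIcc_of_le (by linarith : -ε ≤ ε)] at hy
    rw [Metric.mem_ball, Real.dist_eq, sub_zero]
    rw [Set.mem_Icc] at hy
    rw [abs_lt]; constructor <;> linarith [hy.1, hy.2]
  have hψint : IntervalIntegrable ψ volume (-ε) ε :=
    (hψcont.mono hsubε).intervalIntegrable
  have hPint : IntervalIntegrable (fun x => ψ 0 + x * d0 + x ^ 2 * (c/2)) volume (-ε) ε :=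
    ((continuous_const.add (continuous_id.mul continuous_const)).add
      ((continuous_pow 2).mul continuous_const)).intervalIntegrable _ _
  -- value of polynomial integral
  have hIP : (∫ x in (-ε)..ε, (ψ 0 + x * d0 + x ^ 2 * (c/2))) = 2 * ε * ψ 0 + ε ^ 3 * (c/3) := by
    have i1 : IntervalIntegrable (fun x : ℝ => ψ 0 + x * d0) volume (-ε) ε :=
      (continuous_const.add (continuous_id.mul continuous_const)).intervalIntegrable _ _
    have i2 : IntervalIntegrable (fun x : ℝ => x ^ 2 * (c/2)) volume (-ε) ε :=
      ((continuous_pow 2).mul continuous_const).intervalIntegrable _ _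
    have i3 : IntervalIntegrable (fun x : ℝ => x * d0) volume (-ε) ε :=
      (continuous_id.mul continuous_const).intervalIntegrable _ _
    rw [intervalIntegral.integral_add i1 i2,
      intervalIntegral.integral_add intervalIntegrable_const i3,
      intervalIntegral.integral_const, intervalIntegral.integral_mul_const,
      intervalIntegral.integral_mul_const, integral_id, integral_pow]
    push_cast
    simp only [smul_eq_mul]
    ring
  have hIdiff : |(∫ x in (-ε)..ε, ψ x) - (2 * ε * ψ 0 + ε ^ 3 * (c/3))| ≤ η' * ε * ε * (2 * ε) := by
    rw [← hIP, ← intervalIntegral.integral_sub hψint hPint]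
    have := intervalIntegral.norm_integral_le_of_norm_le_const
      (a := -ε) (b := ε) (C := η' * ε * ε)
      (f := fun x => ψ x - (ψ 0 + x * d0 + x ^ 2 * (c/2))) ?_
    · rw [Real.norm_eq_abs] at this
      calc |∫ x in (-ε)..ε, (ψ x - (ψ 0 + x * d0 + x ^ 2 * (c/2)))| ≤ η' * ε * ε * |ε - -ε| := this
        _ = η' * ε * ε * (2 * ε) := by rw [abs_of_pos (by linarith : (0:ℝ) < ε - -ε)]; ring
    · intro y hy
      have hy' : y ∈ Set.uIcc (-ε) ε := Set.uIoc_subset_uIcc hy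
      rw [Set.uIcc_of_le (by linarith : -ε ≤ ε), Set.mem_Icc] at hy'
      have hyε : |y| ≤ ε := abs_le.2 ⟨by linarith [hy'.1], hy'.2⟩
      have := hB y hyε
      rw [Real.norm_eq_abs]
      calc |ψ y - (ψ 0 + y * d0 + y ^ 2 * (c/2))|
          = |ψ y - ψ 0 - y * d0 - y ^ 2 * (c/2)| := by ring_nf
        _ ≤ η' * ε * ε := this
  -- conclude
  rw [Real.dist_eq]
  have hε3 : (0:ℝ) < ε ^ 3 := by positivity
  have heq : ((∫ t in (-1:ℝ)..1, ψ (t * ε)) - 2 * ψ 0) / ε ^ 2 - c / 3 =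
      ((∫ x in (-ε)..ε, ψ x) - (2 * ε * ψ 0 + ε ^ 3 * (c/3))) / ε ^ 3 := by
    rw [hcomp]
    field_simp
    ring
  rw [heq, abs_div, abs_of_pos hε3, div_lt_iff₀ hε3]
  calc |(∫ x in (-ε)..ε, ψ x) - (2 * ε * ψ 0 + ε ^ 3 * (c/3))| ≤ η' * ε * ε * (2 * ε) := hIdiff
    _ < η * ε ^ 3 := by rw [hη'_def]; nlinarith

open intervalIntegral MeasureTheory Filter Set

lemma line_hasDerivAt (p s : ℝ × ℝ) (τ : ℝ) :
    HasDerivAt (fun τ : ℝ => p + τ • s) s τ := by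
  have h := ((hasDerivAt_id τ).smul_const s).const_add p
  simpa using h

lemma line_contDiffAt {F : ℝ × ℝ → ℝ} {U : Set (ℝ × ℝ)} {p : ℝ × ℝ}
    (hU : IsOpen U) (hp : p ∈ U) (hF : ContDiffOn ℝ 2 F U) (s : ℝ × ℝ) :
    ContDiffAt ℝ 2 (fun τ : ℝ => F (p + τ • s)) 0 := by
  have h2 : ContDiff ℝ 2 (fun τ : ℝ => p + τ • s) :=
    contDiff_const.add (contDiff_id.smul contDiff_const)
  have h1 : ContDiffAt ℝ 2 F (p + (0:ℝ) • s) := by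
    simpa using hF.contDiffAt (hU.mem_nhds hp)
  exact h1.comp 0 h2.contDiffAt

lemma line_deriv2 {F : ℝ × ℝ → ℝ} {U : Set (ℝ × ℝ)} {p : ℝ × ℝ}
    (hU : IsOpen U) (hp : p ∈ U) (hF : ContDiffOn ℝ 2 F U) (s : ℝ × ℝ) :
    deriv (deriv (fun τ : ℝ => F (p + τ • s))) 0 =
      fderiv ℝ (fderiv ℝ F) p s s := by
  rw [show (2:WithTop ℕ∞) = 1 + 1 by norm_num,
    contDiffOn_succ_iff_fderiv_of_isOpen hU] at hF
  obtain ⟨hdiff, -, hcd1⟩ := hF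
  have hf'diff : DifferentiableOn ℝ (fderiv ℝ F) U := hcd1.differentiableOn one_ne_zero
  have hf'' : HasFDerivAt (fderiv ℝ F) (fderiv ℝ (fderiv ℝ F) p) p :=
    (hf'diff.differentiableAt (hU.mem_nhds hp)).hasFDerivAt
  have hLcont : Continuous (fun τ : ℝ => p + τ • s) :=
    continuous_const.add (continuous_id.smul continuous_const)
  have hIopen : IsOpen ((fun τ : ℝ => p + τ • s) ⁻¹' U) := hLcont.isOpen_preimage _ hU
  have h0I : (0:ℝ) ∈ (fun τ : ℝ => p + τ • s) ⁻¹' U := by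
    simp only [Set.mem_preimage, zero_smul, add_zero]; exact hp
  have hstep1 : ∀ τ ∈ (fun τ : ℝ => p + τ • s) ⁻¹' U,
      HasDerivAt (fun τ : ℝ => F (p + τ • s)) (fderiv ℝ F (p + τ • s) s) τ := by
    intro τ hτ
    have hFd : HasFDerivAt F (fderiv ℝ F (p + τ • s)) (p + τ • s) :=
      (hdiff.differentiableAt (hU.mem_nhds hτ)).hasFDerivAt
    exact hFd.comp_hasDerivAt τ (line_hasDerivAt p s τ)
  have hstep2 : deriv (fun τ : ℝ => F (p + τ • s)) =ᶠ[nhds 0]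
      fun τ => fderiv ℝ F (p + τ • s) s := by
    filter_upwards [hIopen.mem_nhds h0I] with τ hτ
    exact (hstep1 τ hτ).deriv
  rw [hstep2.deriv_eq]
  have hf''0 : HasFDerivAt (fderiv ℝ F) (fderiv ℝ (fderiv ℝ F) p) (p + (0:ℝ) • s) := by
    simpa using hf''
  have hcomp := hf''0.comp_hasDerivAt 0 (line_hasDerivAt p s 0)
  have hcomp' : HasDerivAt (fun τ : ℝ => fderiv ℝ F (p + τ • s))
      (fderiv ℝ (fderiv ℝ F) p s) 0 := hcomp
  have hfinal := hcomp'.clm_apply (hasDerivAt_const 0 s)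
  simpa using hfinal.deriv

lemma mixed_partial_eq {F : ℝ × ℝ → ℝ} {U : Set (ℝ × ℝ)} {p : ℝ × ℝ}
    (hU : IsOpen U) (hp : p ∈ U) (hF : ContDiffOn ℝ 2 F U) :
    deriv (fun u => deriv (fun v => F (u, v)) p.2) p.1 =
      fderiv ℝ (fderiv ℝ F) p (1, 0) (0, 1) := by
  rw [show (2:WithTop ℕ∞) = 1 + 1 by norm_num,
    contDiffOn_succ_iff_fderiv_of_isOpen hU] at hF
  obtain ⟨hdiff, -, hcd1⟩ := hF
  have hf'diff : DifferentiableOn ℝ (fderiv ℝ F) U := hcd1.differentiableOn one_ne_zero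
  have hf'' : HasFDerivAt (fderiv ℝ F) (fderiv ℝ (fderiv ℝ F) p) p :=
    (hf'diff.differentiableAt (hU.mem_nhds hp)).hasFDerivAt
  have inner : ∀ u v : ℝ, (u, v) ∈ U →
      HasDerivAt (fun v => F (u, v)) (fderiv ℝ F (u, v) (0, 1)) v := by
    intro u v huv
    exact ((hdiff.differentiableAt (hU.mem_nhds huv)).hasFDerivAt).comp_hasDerivAt v
      ((hasDerivAt_const v u).prodMk (hasDerivAt_id v))
  have hIopen : IsOpen {u : ℝ | (u, p.2) ∈ U} :=
    (Continuous.prodMk continuous_id continuous_const).isOpen_preimage _ hU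
  have houter : (fun u => deriv (fun v => F (u, v)) p.2) =ᶠ[nhds p.1]
      fun u => fderiv ℝ F (u, p.2) (0, 1) := by
    filter_upwards [hIopen.mem_nhds (show p.1 ∈ {u : ℝ | (u, p.2) ∈ U} by
      simp only [Set.mem_setOf_eq, Prod.mk.eta]; exact hp)] with u hu
    exact (inner u p.2 hu).deriv
  rw [houter.deriv_eq]
  have hcurve : HasDerivAt (fun u : ℝ => (u, p.2)) ((1:ℝ), (0:ℝ)) p.1 :=
    (hasDerivAt_id p.1).prodMk (hasDerivAt_const p.1 p.2)
  have hf''p : HasFDerivAt (fderiv ℝ F) (fderiv ℝ (fderiv ℝ F) p) (p.1, p.2) := by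
    rw [Prod.mk.eta]; exact hf''
  have hcomp : HasDerivAt (fun u : ℝ => fderiv ℝ F (u, p.2))
      (fderiv ℝ (fderiv ℝ F) p (1, 0)) p.1 := hf''p.comp_hasDerivAt p.1 hcurve
  have hfinal := hcomp.clm_apply (hasDerivAt_const p.1 ((0:ℝ), (1:ℝ)))
  simpa using hfinal.deriv

lemma diff_line_deriv2 {F : ℝ × ℝ → ℝ} {U : Set (ℝ × ℝ)} {p : ℝ × ℝ}
    (hU : IsOpen U) (hp : p ∈ U) (hF : ContDiffOn ℝ 2 F U) (α β : ℝ) :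
    deriv (deriv (fun τ : ℝ => F (p + τ • ((α, β) : ℝ × ℝ)))) 0 -
      deriv (deriv (fun τ : ℝ => F (p + τ • ((-α, β) : ℝ × ℝ)))) 0 =
      4 * α * β * fderiv ℝ (fderiv ℝ F) p (1, 0) (0, 1) := by
  have hsymm : ∀ v w, fderiv ℝ (fderiv ℝ F) p v w = fderiv ℝ (fderiv ℝ F) p w v := by
    have hF' := hF
    rw [show (2:WithTop ℕ∞) = 1 + 1 by norm_num,
      contDiffOn_succ_iff_fderiv_of_isOpen hU] at hF'
    obtain ⟨hdiff, -, hcd1⟩ := hF'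
    have hf'diff : DifferentiableOn ℝ (fderiv ℝ F) U := hcd1.differentiableOn one_ne_zero
    have hf'' : HasFDerivAt (fderiv ℝ F) (fderiv ℝ (fderiv ℝ F) p) p :=
      (hf'diff.differentiableAt (hU.mem_nhds hp)).hasFDerivAt
    have hev : ∀ᶠ y in nhds p, HasFDerivAt F (fderiv ℝ F y) y := by
      filter_upwards [hU.mem_nhds hp] with y hy
      exact (hdiff.differentiableAt (hU.mem_nhds hy)).hasFDerivAt
    exact second_derivative_symmetric_of_eventually hev hf''
  rw [line_deriv2 hU hp hF ((α, β) : ℝ × ℝ), line_deriv2 hU hp hF ((-α, β) : ℝ × ℝ)]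
  have e1 : ((α, β) : ℝ × ℝ) = α • ((1:ℝ), (0:ℝ)) + β • ((0:ℝ), (1:ℝ)) := by
    simp [Prod.ext_iff]
  have e2 : ((-α, β) : ℝ × ℝ) = (-α) • ((1:ℝ), (0:ℝ)) + β • ((0:ℝ), (1:ℝ)) := by
    simp [Prod.ext_iff]
  rw [e1, e2]
  simp only [map_add, _root_.map_smul, ContinuousLinearMap.add_apply,
    ContinuousLinearMap.smul_apply, smul_eq_mul]
  linear_combination (2 * α * β) * (hsymm ((0:ℝ),(1:ℝ)) ((1:ℝ),(0:ℝ)))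

open intervalIntegral MeasureTheory Filter Set

lemma deriv_differentiableAt' {φ : ℝ → ℝ} (h : ContDiffAt ℝ 2 φ 0) :
    DifferentiableAt ℝ (deriv φ) 0 := by
  obtain ⟨u, hu, hcd⟩ := h.contDiffOn le_rfl (by norm_num)
  obtain ⟨r, hr, hball⟩ := Metric.mem_nhds_iff.1 hu
  have hcdb : ContDiffOn ℝ 2 φ (Metric.ball 0 r) := hcd.mono hball
  rw [show (2:WithTop ℕ∞) = 1 + 1 by norm_num,
    contDiffOn_succ_iff_deriv_of_isOpen Metric.isOpen_ball] at hcdb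
  exact (hcdb.2.2.differentiableOn one_ne_zero).differentiableAt
    (Metric.isOpen_ball.mem_nhds (by simpa using hr))

lemma deriv2_comb {φ₁ φ₂ : ℝ → ℝ} (a b : ℝ)
    (h1 : ContDiffAt ℝ 2 φ₁ 0) (h2 : ContDiffAt ℝ 2 φ₂ 0) :
    deriv (deriv (fun τ => a * φ₁ τ + b * φ₂ τ)) 0 =
      a * deriv (deriv φ₁) 0 + b * deriv (deriv φ₂) 0 := by
  have hev : deriv (fun τ => a * φ₁ τ + b * φ₂ τ) =ᶠ[nhds 0]
      fun τ => a * deriv φ₁ τ + b * deriv φ₂ τ := by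
    filter_upwards [h1.eventually (by simp), h2.eventually (by simp)] with τ ht1 ht2
    have d1 : DifferentiableAt ℝ φ₁ τ := ht1.differentiableAt (by norm_num)
    have d2 : DifferentiableAt ℝ φ₂ τ := ht2.differentiableAt (by norm_num)
    rw [deriv_fun_add (d1.const_mul a) (d2.const_mul b), deriv_const_mul a d1,
      deriv_const_mul b d2]
  rw [hev.deriv_eq]
  have d1 := deriv_differentiableAt' h1
  have d2 := deriv_differentiableAt' h2
  rw [deriv_fun_add (d1.const_mul a) (d2.const_mul b), deriv_const_mul a d1,
    deriv_const_mul b d2]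



/-- If for a diagonal metric `G = diag(g11, g22)` the two diagonals of every
parameter-line rectangle inside `D` have the same energy, then the mixed
second partial derivatives of `g11` and of `g22` vanish identically on `D`. -/
theorem equal_diagonal_energy_implies_mixed_partials_zero
    (umin umax vmin vmax : ℝ)
    (g11 g22 : ℝ × ℝ → ℝ)
    (hg11 : ContDiffOn ℝ 2 g11 (Set.Ioo umin umax ×ˢ Set.Ioo vmin vmax))
    (hg22 : ContDiffOn ℝ 2 g22 (Set.Ioo umin umax ×ˢ Set.Ioo vmin vmax))
    (hE : ∀ u0 v0 α β : ℝ, α * β ≠ 0 →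
      Set.Icc (u0 - |α|) (u0 + |α|) ⊆ Set.Ioo umin umax →
      Set.Icc (v0 - |β|) (v0 + |β|) ⊆ Set.Ioo vmin vmax →
      (∫ t in (-1:ℝ)..1,
          (α ^ 2 * g11 (u0 + t * α, v0 + t * β) +
           β ^ 2 * g22 (u0 + t * α, v0 + t * β))) =
      (∫ t in (-1:ℝ)..1,
          (α ^ 2 * g11 (u0 - t * α, v0 + t * β) +
           β ^ 2 * g22 (u0 - t * α, v0 + t * β)))) :
    ∀ p ∈ Set.Ioo umin umax ×ˢ Set.Ioo vmin vmax,
      deriv (fun u => deriv (fun v => g11 (u, v)) p.2) p.1 = 0 ∧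
      deriv (fun u => deriv (fun v => g22 (u, v)) p.2) p.1 = 0 := by
  intro p hp
  have hDopen : IsOpen (Set.Ioo umin umax ×ˢ Set.Ioo vmin vmax) :=
    isOpen_Ioo.prod isOpen_Ioo
  obtain ⟨u0, v0⟩ := p
  set A := fderiv ℝ (fderiv ℝ g11) (u0, v0) (1, 0) (0, 1) with hA_def
  set B := fderiv ℝ (fderiv ℝ g22) (u0, v0) (1, 0) (0, 1) with hB_def
  have key : ∀ α β : ℝ, α * β ≠ 0 →
      Set.Icc (u0 - |α|) (u0 + |α|) ⊆ Set.Ioo umin umax →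
      Set.Icc (v0 - |β|) (v0 + |β|) ⊆ Set.Ioo vmin vmax →
      α ^ 2 * A + β ^ 2 * B = 0 := by
    intro α β hαβ hIu hIv
    have hψ11 : ContDiffAt ℝ 2 (fun τ : ℝ => g11 ((u0, v0) + τ • ((α, β) : ℝ × ℝ))) 0 :=
      line_contDiffAt hDopen hp hg11 _
    have hψ12 : ContDiffAt ℝ 2 (fun τ : ℝ => g22 ((u0, v0) + τ • ((α, β) : ℝ × ℝ))) 0 :=
      line_contDiffAt hDopen hp hg22 _
    have hψ21 : ContDiffAt ℝ 2 (fun τ : ℝ => g11 ((u0, v0) + τ • ((-α, β) : ℝ × ℝ))) 0 :=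
      line_contDiffAt hDopen hp hg11 _
    have hψ22 : ContDiffAt ℝ 2 (fun τ : ℝ => g22 ((u0, v0) + τ • ((-α, β) : ℝ × ℝ))) 0 :=
      line_contDiffAt hDopen hp hg22 _
    have hψ1 : ContDiffAt ℝ 2 (fun τ : ℝ =>
        α ^ 2 * g11 ((u0, v0) + τ • ((α, β) : ℝ × ℝ)) +
        β ^ 2 * g22 ((u0, v0) + τ • ((α, β) : ℝ × ℝ))) 0 :=
      (contDiffAt_const.mul hψ11).add (contDiffAt_const.mul hψ12)
    have hψ2 : ContDiffAt ℝ 2 (fun τ : ℝ =>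
        α ^ 2 * g11 ((u0, v0) + τ • ((-α, β) : ℝ × ℝ)) +
        β ^ 2 * g22 ((u0, v0) + τ • ((-α, β) : ℝ × ℝ))) 0 :=
      (contDiffAt_const.mul hψ21).add (contDiffAt_const.mul hψ22)
    -- equality of integrals for small positive ε
    have hint : ∀ ε : ℝ, ε ∈ Set.Ioc (0:ℝ) 1 →
        (∫ t in (-1:ℝ)..1,
          (α ^ 2 * g11 ((u0, v0) + (t * ε) • ((α, β) : ℝ × ℝ)) +
           β ^ 2 * g22 ((u0, v0) + (t * ε) • ((α, β) : ℝ × ℝ)))) =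
        (∫ t in (-1:ℝ)..1,
          (α ^ 2 * g11 ((u0, v0) + (t * ε) • ((-α, β) : ℝ × ℝ)) +
           β ^ 2 * g22 ((u0, v0) + (t * ε) • ((-α, β) : ℝ × ℝ)))) := by
      intro ε hε
      have hε0 : 0 < ε := hε.1
      have hε1 : ε ≤ 1 := hε.2
      have hεαβ : (ε * α) * (ε * β) ≠ 0 := by
        have h : (ε * α) * (ε * β) = ε ^ 2 * (α * β) := by ring
        rw [h]
        exact mul_ne_zero (pow_ne_zero 2 hε0.ne') hαβ
      have habs : ∀ x : ℝ, |ε * x| ≤ |x| := by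
        intro x
        rw [abs_mul, abs_of_pos hε0]
        nlinarith [abs_nonneg x]
      have hsubu : Set.Icc (u0 - |ε * α|) (u0 + |ε * α|) ⊆ Set.Ioo umin umax :=
        Set.Subset.trans (Set.Icc_subset_Icc (by linarith [habs α]) (by linarith [habs α])) hIu
      have hsubv : Set.Icc (v0 - |ε * β|) (v0 + |ε * β|) ⊆ Set.Ioo vmin vmax :=
        Set.Subset.trans (Set.Icc_subset_Icc (by linarith [habs β]) (by linarith [habs β])) hIv
      have hE' := hE u0 v0 (ε * α) (ε * β) hεαβ hsubu hsubv
      have e1 : Set.EqOn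
          (fun t : ℝ => (ε * α) ^ 2 * g11 (u0 + t * (ε * α), v0 + t * (ε * β)) +
            (ε * β) ^ 2 * g22 (u0 + t * (ε * α), v0 + t * (ε * β)))
          (fun t : ℝ => ε ^ 2 *
            (α ^ 2 * g11 ((u0, v0) + (t * ε) • ((α, β) : ℝ × ℝ)) +
             β ^ 2 * g22 ((u0, v0) + (t * ε) • ((α, β) : ℝ × ℝ))))
          (Set.uIcc (-1:ℝ) 1) := by
        intro t _
        have harg : (u0, v0) + (t * ε) • ((α, β) : ℝ × ℝ) =
            (u0 + t * (ε * α), v0 + t * (ε * β)) := by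
          simp only [Prod.smul_mk, smul_eq_mul, Prod.mk_add_mk, Prod.mk.injEq]
          constructor <;> ring
        simp only [harg]
        ring
      have e2 : Set.EqOn
          (fun t : ℝ => (ε * α) ^ 2 * g11 (u0 - t * (ε * α), v0 + t * (ε * β)) +
            (ε * β) ^ 2 * g22 (u0 - t * (ε * α), v0 + t * (ε * β)))
          (fun t : ℝ => ε ^ 2 *
            (α ^ 2 * g11 ((u0, v0) + (t * ε) • ((-α, β) : ℝ × ℝ)) +
             β ^ 2 * g22 ((u0, v0) + (t * ε) • ((-α, β) : ℝ × ℝ))))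
          (Set.uIcc (-1:ℝ) 1) := by
        intro t _
        have harg : (u0, v0) + (t * ε) • ((-α, β) : ℝ × ℝ) =
            (u0 - t * (ε * α), v0 + t * (ε * β)) := by
          simp only [Prod.smul_mk, smul_eq_mul, Prod.mk_add_mk, Prod.mk.injEq]
          constructor <;> ring
        simp only [harg]
        ring
      rw [intervalIntegral.integral_congr e1, intervalIntegral.integral_congr e2,
        intervalIntegral.integral_const_mul, intervalIntegral.integral_const_mul] at hE'
      exact mul_left_cancel₀ (pow_ne_zero 2 hε0.ne') hE'
    -- take limits
    have t1 := key1d hψ1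
    have t2 := key1d hψ2
    have heq0 : (α ^ 2 * g11 ((u0, v0) + (0:ℝ) • ((α, β) : ℝ × ℝ)) +
        β ^ 2 * g22 ((u0, v0) + (0:ℝ) • ((α, β) : ℝ × ℝ))) =
        (α ^ 2 * g11 ((u0, v0) + (0:ℝ) • ((-α, β) : ℝ × ℝ)) +
        β ^ 2 * g22 ((u0, v0) + (0:ℝ) • ((-α, β) : ℝ × ℝ))) := by
      simp
    have hcongr : (fun ε : ℝ => ((∫ t in (-1:ℝ)..1,
          (α ^ 2 * g11 ((u0, v0) + (t * ε) • ((α, β) : ℝ × ℝ)) +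
           β ^ 2 * g22 ((u0, v0) + (t * ε) • ((α, β) : ℝ × ℝ)))) -
          2 * (α ^ 2 * g11 ((u0, v0) + (0:ℝ) • ((α, β) : ℝ × ℝ)) +
          β ^ 2 * g22 ((u0, v0) + (0:ℝ) • ((α, β) : ℝ × ℝ)))) / ε ^ 2)
        =ᶠ[nhdsWithin 0 (Set.Ioi 0)]
        (fun ε : ℝ => ((∫ t in (-1:ℝ)..1,
          (α ^ 2 * g11 ((u0, v0) + (t * ε) • ((-α, β) : ℝ × ℝ)) +
           β ^ 2 * g22 ((u0, v0) + (t * ε) • ((-α, β) : ℝ × ℝ)))) -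
          2 * (α ^ 2 * g11 ((u0, v0) + (0:ℝ) • ((-α, β) : ℝ × ℝ)) +
          β ^ 2 * g22 ((u0, v0) + (0:ℝ) • ((-α, β) : ℝ × ℝ)))) / ε ^ 2) := by
      filter_upwards [Ioc_mem_nhdsGT_of_mem
        (⟨le_refl (0:ℝ), zero_lt_one⟩ : (0:ℝ) ∈ Set.Ico (0:ℝ) 1)] with ε hε
      rw [hint ε hε, heq0]
    have hdd := tendsto_nhds_unique (t1.congr' hcongr) t2
    -- compute the second derivatives
    have c1 := deriv2_comb (α ^ 2) (β ^ 2) hψ11 hψ12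
    have c2 := deriv2_comb (α ^ 2) (β ^ 2) hψ21 hψ22
    have d11 := diff_line_deriv2 hDopen hp hg11 α β
    have d22 := diff_line_deriv2 hDopen hp hg22 α β
    have hzero : α ^ 2 * (4 * α * β * A) + β ^ 2 * (4 * α * β * B) = 0 := by
      rw [hA_def, hB_def, ← d11, ← d22]
      have hmain : deriv (deriv (fun τ : ℝ =>
          α ^ 2 * g11 ((u0, v0) + τ • ((α, β) : ℝ × ℝ)) +
          β ^ 2 * g22 ((u0, v0) + τ • ((α, β) : ℝ × ℝ)))) 0 =
        deriv (deriv (fun τ : ℝ =>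
          α ^ 2 * g11 ((u0, v0) + τ • ((-α, β) : ℝ × ℝ)) +
          β ^ 2 * g22 ((u0, v0) + τ • ((-α, β) : ℝ × ℝ)))) 0 := by
        linarith [hdd]
      rw [c1, c2] at hmain
      linarith [hmain]
    have h4 : (4 * α * β) * (α ^ 2 * A + β ^ 2 * B) = 0 := by linarith [hzero]
    have h4ne : (4 : ℝ) * α * β ≠ 0 := by
      intro h
      apply hαβ
      have : (4:ℝ) ≠ 0 := by norm_num
      rcases mul_eq_zero.1 h with h' | h'
      · rcases mul_eq_zero.1 h' with h'' | h''
        · exact absurd h'' this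
        · exact mul_eq_zero_of_left h'' β
      · exact mul_eq_zero_of_right α h'
    exact (mul_eq_zero.1 h4).resolve_left h4ne
  -- choose small rectangles
  have hu0 : u0 ∈ Set.Ioo umin umax := hp.1
  have hv0 : v0 ∈ Set.Ioo vmin vmax := hp.2
  set η := min (min (umax - u0) (u0 - umin)) (min (vmax - v0) (v0 - vmin)) / 4 with hη_def
  have hη : 0 < η := by
    have h1 := hu0.1; have h2 := hu0.2; have h3 := hv0.1; have h4 := hv0.2
    have : 0 < min (min (umax - u0) (u0 - umin)) (min (vmax - v0) (v0 - vmin)) := by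
      simp only [lt_min_iff]
      refine ⟨⟨by linarith, by linarith⟩, by linarith, by linarith⟩
    rw [hη_def]; linarith
  have hbounds : 4 * η ≤ umax - u0 ∧ 4 * η ≤ u0 - umin ∧ 4 * η ≤ vmax - v0 ∧ 4 * η ≤ v0 - vmin := by
    rw [hη_def]
    refine ⟨?_, ?_, ?_, ?_⟩ <;>
    · have h1 := min_le_left (min (umax - u0) (u0 - umin)) (min (vmax - v0) (v0 - vmin))
      have h2 := min_le_right (min (umax - u0) (u0 - umin)) (min (vmax - v0) (v0 - vmin))
      have h3 := min_le_left (umax - u0) (u0 - umin)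
      have h4 := min_le_right (umax - u0) (u0 - umin)
      have h5 := min_le_left (vmax - v0) (v0 - vmin)
      have h6 := min_le_right (vmax - v0) (v0 - vmin)
      linarith
  obtain ⟨hb1, hb2, hb3, hb4⟩ := hbounds
  have hIu : ∀ γ : ℝ, 0 < γ → γ ≤ 2 * η →
      Set.Icc (u0 - |γ|) (u0 + |γ|) ⊆ Set.Ioo umin umax := by
    intro γ h1 h2
    apply Set.Icc_subset_Ioo <;> rw [abs_of_pos h1] <;> linarith
  have hIv : ∀ γ : ℝ, 0 < γ → γ ≤ 2 * η →
      Set.Icc (v0 - |γ|) (v0 + |γ|) ⊆ Set.Ioo vmin vmax := by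
    intro γ h1 h2
    apply Set.Icc_subset_Ioo <;> rw [abs_of_pos h1] <;> linarith
  have k1 := key η η (by positivity) (hIu η hη (by linarith)) (hIv η hη (by linarith))
  have k2 := key η (2 * η) (by positivity) (hIu η hη (by linarith))
    (hIv (2 * η) (by linarith) (by linarith))
  have hη2 : (0:ℝ) < η ^ 2 := by positivity
  have hAB : A = 0 ∧ B = 0 := by
    constructor <;> nlinarith [k1, k2, hη2]
  constructor
  · rw [show ((u0, v0) : ℝ × ℝ).1 = u0 from rfl, show ((u0, v0) : ℝ × ℝ).2 = v0 from rfl]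
    have := mixed_partial_eq hDopen hp hg11
    simp only at this
    rw [this]
    exact hAB.1
  · have := mixed_partial_eq hDopen hp hg22
    simp only at this
    rw [this]
    exact hAB.2
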